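/- Tweedie's formula: if X_t = X_0 + sigma Z with Z standard Gaussian independent of X_0, then the score of the density p_t of X_t satisfies grad log p_t(x) = (E[X_0 | X_t = x] - x) / sigma^2. -/
import Mathlib

open MeasureTheory Real

/-- The isotropic Gaussian density with standard deviation `σ` on `ℝ^d`. -/
noncomputable def gaussDens (d : ℕ) (σ : ℝ) (x : EuclideanSpace ℝ (Fin d)) : ℝ :=
  (2 * π * σ ^ 2) ^ (-(d : ℝ) / 2) * Real.exp (-‖x‖ ^ 2 / (2 * σ ^ 2))

lemma gauss_mul_norm_le {d : ℕ} {σ : ℝ} (hσ : 0 < σ) (x y : EuclideanSpace ℝ (Fin d)) :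
    gaussDens d σ (x - y) * ‖y‖ ≤ (2 * π * σ ^ 2) ^ (-(d : ℝ) / 2) * (‖x‖ + σ) := by
  set A : ℝ := (2 * π * σ ^ 2) ^ (-(d : ℝ) / 2) with hA
  have hApos : 0 < A := by
    have : (0:ℝ) < 2 * π * σ ^ 2 := by positivity
    exact Real.rpow_pos_of_pos this _
  set t : ℝ := ‖x - y‖ with htdef
  have ht : 0 ≤ t := norm_nonneg _
  have hE1 : Real.exp (-t ^ 2 / (2 * σ ^ 2)) ≤ 1 := by
    rw [Real.exp_le_one_iff]
    have : 0 ≤ t ^ 2 / (2 * σ ^ 2) := by positivity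
    have h : -t ^ 2 / (2 * σ ^ 2) = -(t ^ 2 / (2 * σ ^ 2)) := by ring
    rw [h]; linarith
  have hE2 : t * Real.exp (-t ^ 2 / (2 * σ ^ 2)) ≤ σ := by
    rcases eq_or_lt_of_le ht with h | h
    · simp [← h]; positivity
    · have hsq : (t * Real.exp (-t ^ 2 / (2 * σ ^ 2))) ^ 2 ≤ σ ^ 2 := by
        have h1 : (Real.exp (-t ^ 2 / (2 * σ ^ 2))) ^ 2 = Real.exp (-(t ^ 2 / σ ^ 2)) := by
          rw [← Real.exp_nat_mul]; ring_nf
        have h2 : Real.exp (-(t ^ 2 / σ ^ 2)) ≤ (t ^ 2 / σ ^ 2)⁻¹ := by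
          rw [Real.exp_neg]
          exact inv_anti₀ (by positivity) ((Real.add_one_le_exp _).trans' (by linarith))
        calc (t * Real.exp (-t ^ 2 / (2 * σ ^ 2))) ^ 2
            = t ^ 2 * (Real.exp (-t ^ 2 / (2 * σ ^ 2))) ^ 2 := by ring
          _ ≤ t ^ 2 * (t ^ 2 / σ ^ 2)⁻¹ := by
              rw [h1]; exact mul_le_mul_of_nonneg_left h2 (by positivity)
          _ = σ ^ 2 := by field_simp
      exact (pow_le_pow_iff_left₀ (by positivity) hσ.le (by norm_num)).mp hsq
  have hy : ‖y‖ ≤ ‖x‖ + t := by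
    have : y = x - (x - y) := by abel
    calc ‖y‖ = ‖x - (x - y)‖ := by rw [← this]
      _ ≤ ‖x‖ + ‖x - y‖ := norm_sub_le _ _
  have hEnn : 0 ≤ Real.exp (-t ^ 2 / (2 * σ ^ 2)) := (Real.exp_pos _).le
  calc gaussDens d σ (x - y) * ‖y‖
      = A * (Real.exp (-t ^ 2 / (2 * σ ^ 2)) * ‖y‖) := by
        rw [gaussDens]; ring
    _ ≤ A * (Real.exp (-t ^ 2 / (2 * σ ^ 2)) * (‖x‖ + t)) := by
        apply mul_le_mul_of_nonneg_left _ hApos.le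
        exact mul_le_mul_of_nonneg_left hy hEnn
    _ = A * (Real.exp (-t ^ 2 / (2 * σ ^ 2)) * ‖x‖ + t * Real.exp (-t ^ 2 / (2 * σ ^ 2))) := by
        ring
    _ ≤ A * (1 * ‖x‖ + σ) := by
        apply mul_le_mul_of_nonneg_left _ hApos.le
        exact add_le_add (mul_le_mul_of_nonneg_right hE1 (norm_nonneg _)) hE2
    _ = A * (‖x‖ + σ) := by ring

lemma gauss_nonneg {d : ℕ} {σ : ℝ} (hσ : 0 < σ) (x : EuclideanSpace ℝ (Fin d)) :
    0 ≤ gaussDens d σ x := by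
  unfold gaussDens
  have : (0:ℝ) < 2 * π * σ ^ 2 := by positivity
  positivity

lemma gauss_continuous {d : ℕ} {σ : ℝ} (x : EuclideanSpace ℝ (Fin d)) :
    Continuous fun y : EuclideanSpace ℝ (Fin d) => gaussDens d σ (x - y) := by
  unfold gaussDens
  fun_prop

/-- **Tweedie's formula**: if `X_t = X_0 + σ Z` with `Z` standard Gaussian independent of
`X_0`, then the score of the density `p_t` of `X_t` satisfies
`∇ log p_t x = (E[X_0 | X_t = x] - x) / σ²`.  Here `p_t` is the Gaussian convolution of the
density `p₀` of `X_0`, `m x = E[X_0 | X_t = x]` is the conditional mean, and we assume that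
differentiation under the integral sign is valid (`hderiv`). -/
theorem tweedie_formula {d : ℕ} (σ : ℝ) (hσ : 0 < σ)
    (p₀ : EuclideanSpace ℝ (Fin d) → ℝ)
    (hp₀_nonneg : ∀ x, 0 ≤ p₀ x)
    (hp₀_prob : ∫ x, p₀ x = 1)
    (pt : EuclideanSpace ℝ (Fin d) → ℝ)
    (hpt : ∀ x, pt x = ∫ y, p₀ y * gaussDens d σ (x - y))
    (m : EuclideanSpace ℝ (Fin d) → EuclideanSpace ℝ (Fin d))
    (hm : ∀ x, m x = (pt x)⁻¹ • ∫ y, (p₀ y * gaussDens d σ (x - y)) • y)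
    -- differentiation under the integral sign is valid:
    (hderiv : ∀ x, HasGradientAt pt
      (∫ y, ((p₀ y * gaussDens d σ (x - y)) / σ ^ 2) • (y - x)) x)
    (x : EuclideanSpace ℝ (Fin d)) (hx : 0 < pt x) :
    HasGradientAt (fun z => Real.log (pt z)) ((σ ^ 2)⁻¹ • (m x - x)) x := by
  have hσ2 : (0:ℝ) < σ ^ 2 := by positivity
  set f : EuclideanSpace ℝ (Fin d) → ℝ := fun y => p₀ y * gaussDens d σ (x - y) with hfdef
  -- p₀ integrable
  have hp0Int : Integrable p₀ := by
    by_contra h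
    rw [integral_undef h] at hp₀_prob
    exact one_ne_zero hp₀_prob.symm
  -- f integrable
  have hptx : ∫ y, f y = pt x := (hpt x).symm
  have hfInt : Integrable f := by
    by_contra h
    rw [integral_undef h] at hptx
    exact hx.ne' hptx.symm
  -- y ↦ f y • y integrable
  have hC : ∀ y, ‖f y • y‖ ≤ ((2 * π * σ ^ 2) ^ (-(d : ℝ) / 2) * (‖x‖ + σ)) * p₀ y := by
    intro y
    have h1 : ‖f y • y‖ = p₀ y * (gaussDens d σ (x - y) * ‖y‖) := by
      rw [norm_smul, Real.norm_eq_abs, abs_of_nonneg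
        (mul_nonneg (hp₀_nonneg y) (gauss_nonneg hσ _)), mul_assoc]
    rw [h1, mul_comm _ (p₀ y)]
    exact mul_le_mul_of_nonneg_left (gauss_mul_norm_le hσ x y) (hp₀_nonneg y)
  have hInty : Integrable (fun y => f y • y) := by
    apply Integrable.mono' (hp0Int.const_mul _)
      (hfInt.aestronglyMeasurable.smul aestronglyMeasurable_id)
    exact Filter.Eventually.of_forall hC
  have hIntyx : Integrable (fun y => f y • x) := hfInt.smul_const x
  -- compute the gradient integral
  have key : (∫ y, (f y / σ ^ 2) • (y - x))
      = (σ ^ 2)⁻¹ • ((∫ y, f y • y) - pt x • x) := by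
    have h1 : ∀ y, (f y / σ ^ 2) • (y - x) = (σ ^ 2)⁻¹ • (f y • y - f y • x) := by
      intro y
      rw [div_eq_inv_mul, mul_smul, smul_sub]
    simp_rw [h1]
    rw [integral_smul, integral_sub hInty hIntyx, integral_smul_const, hptx]
  -- chain rule for log
  have hG := (hderiv x).hasFDerivAt
  have hlogF := hG.log hx.ne'
  rw [hasGradientAt_iff_hasFDerivAt]
  have heq : (InnerProductSpace.toDual ℝ (EuclideanSpace ℝ (Fin d)))
      ((σ ^ 2)⁻¹ • (m x - x))
      = (pt x)⁻¹ • (InnerProductSpace.toDual ℝ (EuclideanSpace ℝ (Fin d)))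
        (∫ y, (f y / σ ^ 2) • (y - x)) := by
    rw [← _root_.map_smul]
    congr 1
    rw [key, hm, smul_comm ((pt x)⁻¹) ((σ ^ 2)⁻¹), smul_sub ((pt x)⁻¹),
      inv_smul_smul₀ hx.ne']
  rw [heq]
  exact hlogF
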